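/- Any tripartite correlation of the form P(abc|xyz) = Σ_λ q_λ P(a|x,ρ_A^λ)P(b|y,ρ_B^λ)P_λ(c|z), where Alice and Bob both measure σₓ (for x,y=0) and σ_y (for x,y=1) on single-qubit states, satisfies the Mermin expression bound ⟨M⟩ = ⟨A₀B₀C₁⟩+⟨A₀B₁C₀⟩+⟨A₁B₀C₀⟩−⟨A₁B₁C₁⟩ ≤ √2. -/

import Mathlib

open Matrix ComplexOrder

noncomputable def σx : Matrix (Fin 2) (Fin 2) ℂ := !![0, 1; 1, 0]
noncomputable def σy : Matrix (Fin 2) (Fin 2) ℂ := !![0, -Complex.I; Complex.I, 0]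

/-- Observables σₓ (for input 0) and σ_y (for input 1), for both Alice and Bob. -/
noncomputable def Aobs : Fin 2 → Matrix (Fin 2) (Fin 2) ℂ := fun x => if x = 0 then σx else σy

/-- The projector onto the `(-1)^a` eigenspace of a ±1-valued observable `O`. -/
noncomputable def proj (O : Matrix (Fin 2) (Fin 2) ℂ) (a : Fin 2) : Matrix (Fin 2) (Fin 2) ℂ :=
  (2 : ℂ)⁻¹ • (1 + ((-1 : ℂ) ^ (a : ℕ)) • O)

/-- The probability of outcome `a` when measuring observable `O` on qubit state `ρ`. -/
noncomputable def probOf (O : Matrix (Fin 2) (Fin 2) ℂ) (a : Fin 2)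
    (ρ : Matrix (Fin 2) (Fin 2) ℂ) : ℝ := ((proj O a * ρ).trace).re

/-- The correlator ⟨A_x B_y C_z⟩ of a tripartite correlation `P`. -/
noncomputable def corr (P : Fin 2 → Fin 2 → Fin 2 → Fin 2 → Fin 2 → Fin 2 → ℝ)
    (x y z : Fin 2) : ℝ :=
  ∑ a : Fin 2, ∑ b : Fin 2, ∑ c : Fin 2,
    (-1 : ℝ) ^ ((a + b + c : Fin 2) : ℕ) * P a b c x y z

/-- The Mermin expression of a tripartite correlation `P`. -/
noncomputable def Mexpr (P : Fin 2 → Fin 2 → Fin 2 → Fin 2 → Fin 2 → Fin 2 → ℝ) : ℝ :=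
  corr P 0 0 1 + corr P 0 1 0 + corr P 1 0 0 - corr P 1 1 1

lemma qubit_disk (ρ : Matrix (Fin 2) (Fin 2) ℂ) (h : ρ.PosSemidef) (ht : ρ.trace = 1) :
    ((σx * ρ).trace.re)^2 + ((σy * ρ).trace.re)^2 ≤ 1 := by
  set z := ρ 0 1 with hz
  have h10 : ρ 1 0 = starRingEnd ℂ z := by
    have h2 := congrFun (congrFun h.isHermitian 1) 0
    simpa [Matrix.conjTranspose_apply] using h2.symm
  have h11 : (ρ 1 1).im = 0 := by
    have h2 := congrFun (congrFun h.isHermitian 1) 1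
    have := congrArg Complex.im h2
    simp [Matrix.conjTranspose_apply] at this
    linarith
  have htr : (ρ 0 0).re + (ρ 1 1).re = 1 := by
    have := congrArg Complex.re ht
    simpa [Matrix.trace_fin_two] using this
  have hq := h.re_dotProduct_nonneg ![((‖z‖ : ℝ) : ℂ), -(starRingEnd ℂ z)]
  simp [dotProduct, Matrix.mulVec, Fin.sum_univ_two, h10, h11, Complex.mul_re, Complex.add_re] at hq
  rw [← hz] at hq
  have hx : (σx * ρ).trace.re = 2 * z.re := by
    simp [σx, Matrix.trace_fin_two, Matrix.mul_apply, Fin.sum_univ_two, h10, Complex.add_re, Matrix.vecMul, dotProduct]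
    ring
  have hy : (σy * ρ).trace.re = -2 * z.im := by
    simp [σy, Matrix.trace_fin_two, Matrix.mul_apply, Fin.sum_univ_two, h10, Complex.add_re,
      Complex.mul_re, Matrix.vecMul, dotProduct]
    ring
  rw [hx, hy]
  set r := ‖z‖ with hrdef
  have hr0 : 0 ≤ r := norm_nonneg z
  have hr2 : z.re^2 + z.im^2 = r^2 := by
    rw [hrdef, Complex.sq_norm, Complex.normSq_apply]; ring
  have e1 : r * (z.re^2 + z.im^2) = r^3 := by rw [hr2]; ring
  have e3 : (ρ 1 1).re * (z.re^2 + z.im^2) = (ρ 1 1).re * r^2 := by rw [hr2]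
  have e4 : ((ρ 0 0).re + (ρ 1 1).re) * r^2 = r^2 := by rw [htr]; ring
  have hq' : 0 ≤ r^2 - 2*r^3 := by nlinarith [hq, e1, e3, e4]
  have hfin : 4 * r^2 ≤ 1 := by
    rcases eq_or_lt_of_le hr0 with h0 | h0
    · nlinarith
    · have h2r : 2*r ≤ 1 := by nlinarith [mul_pos h0 h0]
      nlinarith
  nlinarith [hr2]

lemma probOf_diff (O ρ : Matrix (Fin 2) (Fin 2) ℂ) :
    probOf O 0 ρ - probOf O 1 ρ = ((O * ρ).trace).re := by
  simp [probOf, proj, Matrix.smul_mul, Matrix.add_mul, Matrix.trace_add, Matrix.trace_smul,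
    smul_eq_mul, Complex.mul_re, Complex.add_re]
  ring

lemma key_ineq (a0 a1 b0 b1 g0 g1 : ℝ) (ha : a0^2 + a1^2 ≤ 1) (hb : b0^2 + b1^2 ≤ 1)
    (hg0 : |g0| ≤ 1) (hg1 : |g1| ≤ 1) :
    a0*b0*g1 + a0*b1*g0 + a1*b0*g0 - a1*b1*g1 ≤ Real.sqrt 2 := by
  set t1 := a0*b1 + a1*b0 with ht1
  set t2 := a0*b0 - a1*b1 with ht2
  have hre : a0*b0*g1 + a0*b1*g0 + a1*b0*g0 - a1*b1*g1 = g0*t1 + g1*t2 := by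
    rw [ht1, ht2]; ring
  have hEq : t1^2 + t2^2 = (a0^2+a1^2) * (b0^2+b1^2) := by rw [ht1, ht2]; ring
  have ht : t1^2 + t2^2 ≤ 1 := by
    rw [hEq]
    exact mul_le_one₀ ha (by positivity) hb
  have h1 : g0*t1 ≤ |t1| := by
    calc g0*t1 ≤ |g0*t1| := le_abs_self _
    _ = |g0| * |t1| := abs_mul _ _
    _ ≤ 1 * |t1| := by gcongr
    _ = |t1| := one_mul _
  have h2 : g1*t2 ≤ |t2| := by
    calc g1*t2 ≤ |g1*t2| := le_abs_self _
    _ = |g1| * |t2| := abs_mul _ _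
    _ ≤ 1 * |t2| := by gcongr
    _ = |t2| := one_mul _
  have h3 : |t1| + |t2| ≤ Real.sqrt 2 := by
    nlinarith [Real.sq_sqrt (by norm_num : (0:ℝ) ≤ 2), Real.sqrt_nonneg 2,
      sq_nonneg (|t1| - |t2|), sq_abs t1, sq_abs t2, abs_nonneg t1, abs_nonneg t2,
      sq_nonneg (|t1| + |t2| - Real.sqrt 2)]
  linarith [hre ▸ (by linarith : g0*t1 + g1*t2 ≤ |t1| + |t2|)]

theorem stmt10 (n : ℕ) (q : Fin n → ℝ) (hq : ∀ l, 0 ≤ q l) (hq1 : ∑ l, q l = 1)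
    (ρA ρB : Fin n → Matrix (Fin 2) (Fin 2) ℂ)
    (hρA : ∀ l, (ρA l).PosSemidef ∧ (ρA l).trace = 1)
    (hρB : ∀ l, (ρB l).PosSemidef ∧ (ρB l).trace = 1)
    (Pc : Fin n → Fin 2 → Fin 2 → ℝ)
    (hPc : ∀ l c z, 0 ≤ Pc l c z) (hPc1 : ∀ l z, ∑ c : Fin 2, Pc l c z = 1)
    (P : Fin 2 → Fin 2 → Fin 2 → Fin 2 → Fin 2 → Fin 2 → ℝ)
    (hP : ∀ a b c x y z, P a b c x y z =
      ∑ l, q l * probOf (Aobs x) a (ρA l) * probOf (Aobs y) b (ρB l) * Pc l c z) :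
    Mexpr P ≤ Real.sqrt 2 := by
  -- expectation values
  set EA : Fin 2 → Fin n → ℝ := fun x l => ((Aobs x * ρA l).trace).re with hEA
  set EB : Fin 2 → Fin n → ℝ := fun y l => ((Aobs y * ρB l).trace).re with hEB
  set EC : Fin 2 → Fin n → ℝ := fun z l => Pc l 0 z - Pc l 1 z with hEC
  have swap : ∀ (f : Fin 2 → Fin 2 → Fin 2 → Fin n → ℝ),
      (∑ a : Fin 2, ∑ b : Fin 2, ∑ c : Fin 2, ∑ l, f a b c l)
      = ∑ l, ∑ a : Fin 2, ∑ b : Fin 2, ∑ c : Fin 2, f a b c l := by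
    intro f
    have h1 : ∀ (a b : Fin 2), (∑ c : Fin 2, ∑ l, f a b c l) = ∑ l, ∑ c : Fin 2, f a b c l :=
      fun a b => Finset.sum_comm
    simp_rw [h1]
    have h2 : ∀ (a : Fin 2), (∑ b : Fin 2, ∑ l, ∑ c : Fin 2, f a b c l)
        = ∑ l, ∑ b : Fin 2, ∑ c : Fin 2, f a b c l := fun a => Finset.sum_comm
    simp_rw [h2]
    exact Finset.sum_comm
  have hcorr : ∀ x y z, corr P x y z = ∑ l, q l * EA x l * EB y l * EC z l := by
    intro x y z
    have : corr P x y z = ∑ a : Fin 2, ∑ b : Fin 2, ∑ c : Fin 2, ∑ l,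
        (-1 : ℝ) ^ ((a + b + c : Fin 2) : ℕ)
          * (q l * probOf (Aobs x) a (ρA l) * probOf (Aobs y) b (ρB l) * Pc l c z) := by
      simp only [corr, hP, Finset.mul_sum]
    rw [this, swap]
    refine Finset.sum_congr rfl fun l _ => ?_
    have hA := probOf_diff (Aobs x) (ρA l)
    have hB := probOf_diff (Aobs y) (ρB l)
    rw [hEA, hEB, hEC]
    simp only [← hA, ← hB]
    simp only [Fin.sum_univ_two]
    norm_num [Fin.isValue]
    simp only [show ((1 + 1 : Fin 2) : ℕ) = 0 by rfl, show ((1 + 1 + 1 : Fin 2) : ℕ) = 1 by rfl]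
    ring
  have hMl : ∀ l, q l * EA 0 l * EB 0 l * EC 1 l + q l * EA 0 l * EB 1 l * EC 0 l
      + q l * EA 1 l * EB 0 l * EC 0 l - q l * EA 1 l * EB 1 l * EC 1 l
      ≤ q l * Real.sqrt 2 := by
    intro l
    have ha : (EA 0 l)^2 + (EA 1 l)^2 ≤ 1 := by
      simpa [hEA, Aobs] using qubit_disk (ρA l) (hρA l).1 (hρA l).2
    have hb : (EB 0 l)^2 + (EB 1 l)^2 ≤ 1 := by
      simpa [hEB, Aobs] using qubit_disk (ρB l) (hρB l).1 (hρB l).2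
    have hgc : ∀ z, |EC z l| ≤ 1 := by
      intro z
      have hs : Pc l 0 z + Pc l 1 z = 1 := by
        have := hPc1 l z; rwa [Fin.sum_univ_two] at this
      rw [hEC, abs_le]
      constructor <;> simp <;> nlinarith [hPc l 0 z, hPc l 1 z]
    have := key_ineq (EA 0 l) (EA 1 l) (EB 0 l) (EB 1 l) (EC 0 l) (EC 1 l) ha hb (hgc 0) (hgc 1)
    nlinarith [mul_le_mul_of_nonneg_left this (hq l)]
  have : Mexpr P = ∑ l, (q l * EA 0 l * EB 0 l * EC 1 l + q l * EA 0 l * EB 1 l * EC 0 l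
      + q l * EA 1 l * EB 0 l * EC 0 l - q l * EA 1 l * EB 1 l * EC 1 l) := by
    rw [Mexpr, hcorr 0 0 1, hcorr 0 1 0, hcorr 1 0 0, hcorr 1 1 1,
      ← Finset.sum_add_distrib, ← Finset.sum_add_distrib, ← Finset.sum_sub_distrib]
  rw [this]
  calc ∑ l, (q l * EA 0 l * EB 0 l * EC 1 l + q l * EA 0 l * EB 1 l * EC 0 l
      + q l * EA 1 l * EB 0 l * EC 0 l - q l * EA 1 l * EB 1 l * EC 1 l)
      ≤ ∑ l, q l * Real.sqrt 2 := Finset.sum_le_sum fun l _ => hMl l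
    _ = Real.sqrt 2 := by rw [← Finset.sum_mul, hq1, one_mul]
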